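/- Let m ≠ n be positive integers and let Φ be an m×n complex matrix with |Φ(i,j)| = 1 for all entries. Let d be the rank of Φ, and suppose: (a) ΦΦ*Φ = (mn/d)·Φ (the columns form a tight frame for their span); (b) there is w₁ ≥ 0 with |(Φ*Φ)(j, j′)| = w₁ for all j ≠ j′ (equiangular columns); (c) there is w₂ ≥ 0 with |(ΦΦ*)(i, i′)| = w₂ for all i ≠ i′ (equiangular rows); and (d) (1/n)·√((n − d)/(d(n − 1))) = (1/m)·√((m − d)/(d(m − 1))). Then for either choice of sign ±, setting g = √(m+n) and f = −√(m+n−1) / ( √(m+n)·√(m+n−1) ± √(mn) ), the m×(n+m) block matrix Ψ = [ Φ , f·ΦΦ* + g·I ] satisfies: ΨΨ* = (m+n)·I; every column of Ψ has squared norm m; and all off-diagonal entries of Ψ*Ψ have the same modulus, namely √(mn/(m+n−1)). Hence the n+m columns of Ψ form an equiangular tight frame for ℂ^m. -/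

import Mathlib

open Matrix in
lemma herm_trace_sq {k : ℕ} (A : Matrix (Fin k) (Fin k) ℂ) (hA : Aᴴ = A)
    (c w : ℝ) (hdiag : ∀ i, A i i = ((c : ℝ) : ℂ))
    (hoff : ∀ i i', i ≠ i' → ‖A i i'‖ = w) :
    Matrix.trace (A * A) = ((((k : ℝ)) * c ^ 2 + (k : ℝ) * ((k : ℝ) - 1) * w ^ 2 : ℝ) : ℂ) := by
  have hsym : ∀ i i' : Fin k, A i' i = star (A i i') := by
    intro i i'
    rw [← Matrix.conjTranspose_apply, hA]
  have hterm : ∀ i i' : Fin k, A i i' * A i' i = ((‖A i i'‖ ^ 2 : ℝ) : ℂ) := by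
    intro i i'
    rw [hsym i i']
    simp [Complex.star_def, Complex.mul_conj, Complex.sq_norm]
  have h1 : Matrix.trace (A * A) = ∑ i : Fin k, ∑ i' : Fin k, A i i' * A i' i := by
    simp [Matrix.trace, Matrix.mul_apply, Matrix.diag]
  rw [h1]
  have h2 : ∀ i : Fin k, ∑ i' : Fin k, A i i' * A i' i
      = ((c ^ 2 + ((k : ℝ) - 1) * w ^ 2 : ℝ) : ℂ) := by
    intro i
    have hk1 : 1 ≤ k := i.pos
    rw [← Finset.sum_erase_add _ _ (Finset.mem_univ i)]
    have hdterm : A i i * A i i = ((c ^ 2 : ℝ) : ℂ) := by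
      rw [hdiag i]; push_cast; ring
    have hoterm : ∀ i' ∈ Finset.univ.erase i, A i i' * A i' i = ((w ^ 2 : ℝ) : ℂ) := by
      intro i' hi'
      have hne : i ≠ i' := fun h => (Finset.mem_erase.mp hi').1 h.symm
      rw [hterm i i', hoff i i' hne]
    rw [Finset.sum_congr rfl hoterm, hdterm, Finset.sum_const,
      Finset.card_erase_of_mem (Finset.mem_univ i)]
    simp only [Finset.card_univ, Fintype.card_fin, nsmul_eq_mul]
    push_cast [Nat.cast_sub hk1]
    ring
  rw [Finset.sum_congr rfl fun i _ => h2 i, Finset.sum_const]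
  simp only [Finset.card_univ, Fintype.card_fin, nsmul_eq_mul]
  push_cast
  ring

open Matrix in
lemma etf_aux (m n : ℕ) (Φ : Matrix (Fin m) (Fin n) ℂ)
    (hflat : ∀ i j, ‖Φ i j‖ = 1)
    (aR f g : ℝ)
    (ha' : Φ * Φᴴ * Φ = ((aR : ℝ) : ℂ) • Φ)
    (hg2 : g ^ 2 = (m : ℝ) + (n : ℝ))
    (ks1 : 1 + 2 * f * g + f ^ 2 * aR = 0)
    (habs : |f * aR + g| = Real.sqrt ((m : ℝ) * (n : ℝ) / ((m : ℝ) + (n : ℝ) - 1)))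
    (hcols : ∀ j j' : Fin n, j ≠ j' → ‖(Φᴴ * Φ) j j'‖
      = Real.sqrt ((m : ℝ) * (n : ℝ) / ((m : ℝ) + (n : ℝ) - 1)))
    (hrows : ∀ i i' : Fin m, i ≠ i' → ‖(Φ * Φᴴ) i i'‖
      = Real.sqrt ((m : ℝ) * (n : ℝ) / ((m : ℝ) + (n : ℝ) - 1))) :
    (Matrix.fromCols Φ ((f : ℂ) • (Φ * Φᴴ) + (g : ℂ) • 1) *
        (Matrix.fromCols Φ ((f : ℂ) • (Φ * Φᴴ) + (g : ℂ) • 1))ᴴ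
      = ((m : ℂ) + (n : ℂ)) • 1) ∧
    (∀ c, ((Matrix.fromCols Φ ((f : ℂ) • (Φ * Φᴴ) + (g : ℂ) • 1))ᴴ *
        Matrix.fromCols Φ ((f : ℂ) • (Φ * Φᴴ) + (g : ℂ) • 1)) c c = (m : ℂ)) ∧
    (∀ c c', c ≠ c' → ‖((Matrix.fromCols Φ ((f : ℂ) • (Φ * Φᴴ) + (g : ℂ) • 1))ᴴ *
        Matrix.fromCols Φ ((f : ℂ) • (Φ * Φᴴ) + (g : ℂ) • 1)) c c'‖
      = Real.sqrt ((m : ℝ) * (n : ℝ) / ((m : ℝ) + (n : ℝ) - 1))) := by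
  have hunit : ∀ (i : Fin m) (j : Fin n), Φ i j * star (Φ i j) = 1 := by
    intro i j
    rw [Complex.star_def, Complex.mul_conj]
    norm_cast
    rw [← Complex.sq_norm, hflat i j]
    norm_num
  have hGdiag : ∀ i : Fin m, (Φ * Φᴴ) i i = (n : ℂ) := by
    intro i
    simp only [Matrix.mul_apply, Matrix.conjTranspose_apply]
    rw [Finset.sum_congr rfl fun j _ => hunit i j]
    simp
  have hHdiag : ∀ j : Fin n, (Φᴴ * Φ) j j = (m : ℂ) := by
    intro j
    simp only [Matrix.mul_apply, Matrix.conjTranspose_apply]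
    have : ∀ i : Fin m, star (Φ i j) * Φ i j = 1 := fun i => by
      rw [mul_comm]; exact hunit i j
    rw [Finset.sum_congr rfl fun i _ => this i]
    simp
  set B : Matrix (Fin m) (Fin m) ℂ := (f : ℂ) • (Φ * Φᴴ) + (g : ℂ) • 1 with hBdef
  have hGherm : (Φ * Φᴴ)ᴴ = Φ * Φᴴ := by simp [Matrix.conjTranspose_mul]
  have hBherm : Bᴴ = B := by
    simp [hBdef, Matrix.conjTranspose_smul, Matrix.conjTranspose_mul, Complex.star_def,
      Complex.conj_ofReal]
  have hG2 : (Φ * Φᴴ) * (Φ * Φᴴ) = ((aR : ℝ) : ℂ) • (Φ * Φᴴ) := by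
    rw [← Matrix.mul_assoc, ha', Matrix.smul_mul]
  have hΦG : Φᴴ * (Φ * Φᴴ) = ((aR : ℝ) : ℂ) • Φᴴ := by
    have h := congrArg Matrix.conjTranspose ha'
    simpa [Matrix.conjTranspose_mul, Matrix.conjTranspose_smul, Complex.star_def,
      Complex.conj_ofReal] using h
  have c1C : ((f : ℂ)) ^ 2 * ((aR : ℝ) : ℂ) + 2 * (f : ℂ) * (g : ℂ) = -1 := by
    have h := congrArg (Complex.ofReal) ks1
    push_cast at h ⊢
    linear_combination h
  have hg2C : ((g : ℝ) : ℂ) ^ 2 = (m : ℂ) + (n : ℂ) := by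
    have h := congrArg (Complex.ofReal) hg2
    push_cast at h ⊢
    linear_combination h
  have hBB : B * B = ((m : ℂ) + (n : ℂ)) • (1 : Matrix (Fin m) (Fin m) ℂ) - Φ * Φᴴ := by
    have expand : B * B = ((f : ℂ) ^ 2 * ((aR : ℝ) : ℂ) + 2 * (f : ℂ) * (g : ℂ)) • (Φ * Φᴴ)
        + (((g : ℝ) : ℂ) ^ 2) • (1 : Matrix (Fin m) (Fin m) ℂ) := by
      rw [hBdef]
      simp only [Matrix.add_mul, Matrix.mul_add, Matrix.smul_mul, Matrix.mul_smul,
        Matrix.one_mul, Matrix.mul_one, hG2, smul_smul]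
      module
    rw [expand, c1C, hg2C]
    module
  have hΦB : Φᴴ * B = (((f * aR + g : ℝ)) : ℂ) • Φᴴ := by
    rw [hBdef]
    simp only [Matrix.mul_add, Matrix.mul_smul, Matrix.mul_one, hΦG, smul_smul]
    push_cast
    module
  have hBΦ : B * Φ = (((f * aR + g : ℝ)) : ℂ) • Φ := by
    rw [hBdef]
    simp only [Matrix.add_mul, Matrix.smul_mul, Matrix.one_mul, Matrix.mul_assoc] at *
    rw [ha']
    simp only [smul_smul]
    push_cast
    module
  have hblocks : (Matrix.fromCols Φ B)ᴴ * Matrix.fromCols Φ B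
      = Matrix.fromBlocks (Φᴴ * Φ) ((((f * aR + g : ℝ)) : ℂ) • Φᴴ)
          ((((f * aR + g : ℝ)) : ℂ) • Φ) (((m : ℂ) + (n : ℂ)) • 1 - Φ * Φᴴ) := by
    rw [Matrix.conjTranspose_fromCols_eq_fromRows_conjTranspose,
      Matrix.fromRows_mul_fromCols, hBherm, hΦB, hBΦ, hBB]
  refine ⟨?_, ?_, ?_⟩
  · rw [Matrix.conjTranspose_fromCols_eq_fromRows_conjTranspose,
      Matrix.fromCols_mul_fromRows, hBherm, hBB]
    abel
  · intro c
    rw [hblocks]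
    rcases c with j | i
    · simpa using hHdiag j
    · simp only [Matrix.fromBlocks_apply₂₂, Matrix.sub_apply, Matrix.smul_apply,
        Matrix.one_apply_eq, smul_eq_mul, mul_one, hGdiag i]
      ring
  · intro c c' hne
    rcases c with j | i <;> rcases c' with j' | i'
    · have hjj : j ≠ j' := fun h => hne (by rw [h])
      rw [hblocks]
      simpa using hcols j j' hjj
    · rw [hblocks]
      simp only [Matrix.fromBlocks_apply₁₂, Matrix.smul_apply, smul_eq_mul,
        Matrix.conjTranspose_apply]
      rw [norm_mul, Complex.norm_real, Real.norm_eq_abs, Complex.star_def, Complex.norm_conj, hflat,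
        mul_one, habs]
    · rw [hblocks]
      simp only [Matrix.fromBlocks_apply₂₁, Matrix.smul_apply, smul_eq_mul]
      rw [norm_mul, Complex.norm_real, Real.norm_eq_abs, hflat, mul_one, habs]
    · have hii : i ≠ i' := fun h => hne (by rw [h])
      rw [hblocks]
      simp only [Matrix.fromBlocks_apply₂₂, Matrix.sub_apply, Matrix.smul_apply,
        Matrix.one_apply_ne hii, smul_eq_mul, mul_zero, zero_sub]
      rw [norm_neg]
      exact hrows i i' hii

lemma Dp_pos' {M N : ℝ} (hM : 2 ≤ M) (hN : 2 ≤ N) : 0 < M^2+M*N+N^2-M-N := by nlinarith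

lemma hd0_aux' {M N w : ℝ} (hM : 1 ≤ M) (hN : 1 ≤ N)
    (h : 0 = M*N^2 + M*(M-1)*w^2) : False := by
  nlinarith [sq_nonneg w, mul_nonneg (mul_nonneg (by linarith : (0:ℝ) ≤ M)
    (by linarith : (0:ℝ) ≤ M-1)) (sq_nonneg w)]

lemma mn_lt_aux' {M N : ℝ} (hDp : 0 < M^2+M*N+N^2-M-N) : M*N < (M+N)*(M+N-1) := by nlinarith


set_option maxHeartbeats 1000000 in
open Matrix in
/-- Extending a flat "doubly equiangular" tight frame to a larger ETF: if `Φ` is a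
non-square unimodular `m × n` matrix of rank `d` whose columns form a tight frame for
their span, whose columns and rows are both equiangular, and whose column and row Welch
bounds match, then for either choice of sign, with
`g = √(m+n)` and `f = −√(m+n−1)/(√(m+n)√(m+n−1) ± √(mn))`, the block matrix
`Ψ = [Φ, fΦΦ* + gI]` satisfies `ΨΨ* = (m+n)I`, has columns of squared norm `m`, and all
off-diagonal entries of `Ψ*Ψ` have modulus `√(mn/(m+n−1))`: its `n + m` columns form an
equiangular tight frame for `ℂ^m`. -/
theorem extend_flat_etf (m n : ℕ) (hm : 0 < m) (hn : 0 < n) (hmn : m ≠ n)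
    (Φ : Matrix (Fin m) (Fin n) ℂ)
    (hflat : ∀ i j, ‖Φ i j‖ = 1)
    (d : ℕ) (hd : d = Φ.rank)
    (ha : Φ * Φᴴ * Φ = (((m : ℂ) * (n : ℂ)) / (d : ℂ)) • Φ)
    (w₁ : ℝ) (hw₁ : 0 ≤ w₁)
    (hcols : ∀ j j' : Fin n, j ≠ j' → ‖(Φᴴ * Φ) j j'‖ = w₁)
    (w₂ : ℝ) (hw₂ : 0 ≤ w₂)
    (hrows : ∀ i i' : Fin m, i ≠ i' → ‖(Φ * Φᴴ) i i'‖ = w₂)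
    (hwelch : (1 / (n : ℝ)) * Real.sqrt (((n : ℝ) - d) / (d * ((n : ℝ) - 1)))
      = (1 / (m : ℝ)) * Real.sqrt (((m : ℝ) - d) / (d * ((m : ℝ) - 1))))
    (ε : ℝ) (hε : ε = 1 ∨ ε = -1) :
    let g : ℝ := Real.sqrt ((m : ℝ) + (n : ℝ))
    let f : ℝ := -Real.sqrt ((m : ℝ) + (n : ℝ) - 1) /
      (Real.sqrt ((m : ℝ) + (n : ℝ)) * Real.sqrt ((m : ℝ) + (n : ℝ) - 1)
        + ε * Real.sqrt ((m : ℝ) * (n : ℝ)))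
    let Ψ : Matrix (Fin m) (Fin n ⊕ Fin m) ℂ :=
      Matrix.fromCols Φ ((f : ℂ) • (Φ * Φᴴ) + (g : ℂ) • 1)
    (Ψ * Ψᴴ = ((m : ℂ) + (n : ℂ)) • 1) ∧
    (∀ c, (Ψᴴ * Ψ) c c = (m : ℂ)) ∧
    (∀ c c', c ≠ c' → ‖(Ψᴴ * Ψ) c c'‖
      = Real.sqrt ((m : ℝ) * (n : ℝ) / ((m : ℝ) + (n : ℝ) - 1))) := by
  intro g f Ψ
  have hM1 : (1:ℝ) ≤ (m:ℝ) := by exact_mod_cast hm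
  have hN1 : (1:ℝ) ≤ (n:ℝ) := by exact_mod_cast hn
  have hunit : ∀ (i : Fin m) (j : Fin n), Φ i j * star (Φ i j) = 1 := by
    intro i j
    rw [Complex.star_def, Complex.mul_conj]
    norm_cast
    rw [← Complex.sq_norm, hflat i j]
    norm_num
  have hGherm : (Φ * Φᴴ)ᴴ = Φ * Φᴴ := by simp [Matrix.conjTranspose_mul]
  have hHherm : (Φᴴ * Φ)ᴴ = Φᴴ * Φ := by simp [Matrix.conjTranspose_mul]
  have hGdiag : ∀ i : Fin m, (Φ * Φᴴ) i i = (((n:ℝ)) : ℂ) := by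
    intro i
    simp only [Matrix.mul_apply, Matrix.conjTranspose_apply]
    rw [Finset.sum_congr rfl fun j _ => hunit i j]
    push_cast
    simp
  have hHdiag : ∀ j : Fin n, (Φᴴ * Φ) j j = (((m:ℝ)) : ℂ) := by
    intro j
    simp only [Matrix.mul_apply, Matrix.conjTranspose_apply]
    have : ∀ i : Fin m, star (Φ i j) * Φ i j = 1 := fun i => by
      rw [mul_comm]; exact hunit i j
    rw [Finset.sum_congr rfl fun i _ => this i]
    push_cast
    simp
  have hG2 : (Φ * Φᴴ) * (Φ * Φᴴ) = (((m:ℂ)*(n:ℂ))/(d:ℂ)) • (Φ * Φᴴ) := by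
    rw [← Matrix.mul_assoc, ha, Matrix.smul_mul]
  have hH2 : (Φᴴ * Φ) * (Φᴴ * Φ) = (((m:ℂ)*(n:ℂ))/(d:ℂ)) • (Φᴴ * Φ) := by
    rw [Matrix.mul_assoc, ← Matrix.mul_assoc Φ, ha, Matrix.mul_smul]
  have trG : Matrix.trace (Φ * Φᴴ) = (((m:ℝ)*(n:ℝ) : ℝ) : ℂ) := by
    have h0 : Matrix.trace (Φ * Φᴴ) = ∑ i : Fin m, (Φ * Φᴴ) i i := rfl
    rw [h0, Finset.sum_congr rfl fun i _ => hGdiag i, Finset.sum_const]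
    simp only [Finset.card_univ, Fintype.card_fin, nsmul_eq_mul]
    push_cast
    ring
  have trH : Matrix.trace (Φᴴ * Φ) = (((m:ℝ)*(n:ℝ) : ℝ) : ℂ) := by
    have h0 : Matrix.trace (Φᴴ * Φ) = ∑ j : Fin n, (Φᴴ * Φ) j j := rfl
    rw [h0, Finset.sum_congr rfl fun j _ => hHdiag j, Finset.sum_const]
    simp only [Finset.card_univ, Fintype.card_fin, nsmul_eq_mul]
    push_cast
    ring
  have EG := herm_trace_sq (Φ * Φᴴ) hGherm ((n:ℝ)) w₂ hGdiag hrows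
  have EH := herm_trace_sq (Φᴴ * Φ) hHherm ((m:ℝ)) w₁ hHdiag hcols
  have E1 : (m:ℝ)*(n:ℝ)/(d:ℝ)*((m:ℝ)*(n:ℝ))
      = (m:ℝ)*(n:ℝ)^2 + (m:ℝ)*((m:ℝ)-1)*w₂^2 := by
    rw [hG2, Matrix.trace_smul, trG, smul_eq_mul] at EG
    have h : ((((m:ℝ)*(n:ℝ)/(d:ℝ))*((m:ℝ)*(n:ℝ)) : ℝ) : ℂ)
        = (((m:ℝ)*(n:ℝ)^2 + (m:ℝ)*((m:ℝ)-1)*w₂^2 : ℝ) : ℂ) := by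
      rw [← EG]
      push_cast
      ring
    exact_mod_cast h
  have E2 : (m:ℝ)*(n:ℝ)/(d:ℝ)*((m:ℝ)*(n:ℝ))
      = (n:ℝ)*(m:ℝ)^2 + (n:ℝ)*((n:ℝ)-1)*w₁^2 := by
    rw [hH2, Matrix.trace_smul, trH, smul_eq_mul] at EH
    have h : ((((m:ℝ)*(n:ℝ)/(d:ℝ))*((m:ℝ)*(n:ℝ)) : ℝ) : ℂ)
        = (((n:ℝ)*(m:ℝ)^2 + (n:ℝ)*((n:ℝ)-1)*w₁^2 : ℝ) : ℂ) := by
      rw [← EH]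
      push_cast
      ring
    exact_mod_cast h
  have hd0 : (d:ℝ) ≠ 0 := by
    intro h0
    rw [h0, div_zero, zero_mul] at E1
    exact hd0_aux' hM1 hN1 E1
  have hdpos : (0:ℝ) < (d:ℝ) := (Nat.cast_nonneg d).lt_of_ne (Ne.symm hd0)
  have hd1 : 1 ≤ d := Nat.pos_of_ne_zero (by exact_mod_cast hd0)
  have hdm : d ≤ m := by rw [hd]; exact Φ.rank_le_height
  have hdn : d ≤ n := by rw [hd]; exact Φ.rank_le_width
  have hm2 : 2 ≤ m := by
    by_contra hc
    have hm1 : m = 1 := by omega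
    have hd1' : d = 1 := by omega
    have hn2 : 2 ≤ n := by omega
    have hN2 : (2:ℝ) ≤ (n:ℝ) := by exact_mod_cast hn2
    rw [hm1, hd1'] at hwelch
    push_cast at hwelch
    have hne : (n:ℝ) - 1 ≠ 0 := ne_of_gt (by linarith)
    rw [show ((n:ℝ)-1)/(1*((n:ℝ)-1)) = 1 by rw [one_mul, div_self hne]] at hwelch
    norm_num [Real.sqrt_one] at hwelch
    omega
  have hn2 : 2 ≤ n := by
    by_contra hc
    have hn1 : n = 1 := by omega
    have hd1' : d = 1 := by omega
    have hm2' : 2 ≤ m := by omega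
    have hM2 : (2:ℝ) ≤ (m:ℝ) := by exact_mod_cast hm2'
    rw [hn1, hd1'] at hwelch
    push_cast at hwelch
    have hne : (m:ℝ) - 1 ≠ 0 := ne_of_gt (by linarith)
    rw [show ((m:ℝ)-1)/(1*((m:ℝ)-1)) = 1 by rw [one_mul, div_self hne]] at hwelch
    norm_num [Real.sqrt_one] at hwelch
    linarith
  have hM2 : (2:ℝ) ≤ (m:ℝ) := by exact_mod_cast hm2
  have hN2 : (2:ℝ) ≤ (n:ℝ) := by exact_mod_cast hn2
  have hMNne : (m:ℝ) - (n:ℝ) ≠ 0 := sub_ne_zero.mpr (by exact_mod_cast hmn)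
  have hdnR : (d:ℝ) ≤ (n:ℝ) := by exact_mod_cast hdn
  have hdmR : (d:ℝ) ≤ (m:ℝ) := by exact_mod_cast hdm
  have harg1 : 0 ≤ ((n:ℝ) - (d:ℝ))/((d:ℝ)*((n:ℝ)-1)) :=
    div_nonneg (by linarith) (mul_nonneg hdpos.le (by linarith))
  have harg2 : 0 ≤ ((m:ℝ) - (d:ℝ))/((d:ℝ)*((m:ℝ)-1)) :=
    div_nonneg (by linarith) (mul_nonneg hdpos.le (by linarith))
  have hsq : ((1/(n:ℝ)))^2 * (((n:ℝ)-(d:ℝ))/((d:ℝ)*((n:ℝ)-1)))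
      = ((1/(m:ℝ)))^2 * (((m:ℝ)-(d:ℝ))/((d:ℝ)*((m:ℝ)-1))) := by
    have h := congrArg (fun x : ℝ => x^2) hwelch
    simpa [mul_pow, Real.sq_sqrt harg1, Real.sq_sqrt harg2] using h
  have h3 : (m:ℝ)^2*((n:ℝ)-(d:ℝ))*((m:ℝ)-1) = (n:ℝ)^2*((m:ℝ)-(d:ℝ))*((n:ℝ)-1) := by
    have hm1ne : (m:ℝ)-1 ≠ 0 := ne_of_gt (by linarith)
    have hn1ne : (n:ℝ)-1 ≠ 0 := ne_of_gt (by linarith)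
    have hmne : (m:ℝ) ≠ 0 := ne_of_gt (by linarith)
    have hnne : (n:ℝ) ≠ 0 := ne_of_gt (by linarith)
    field_simp at hsq
    apply mul_left_cancel₀ hd0
    linear_combination (d:ℝ) * hsq
  have key : (d:ℝ)*((m:ℝ)^2+(m:ℝ)*(n:ℝ)+(n:ℝ)^2-(m:ℝ)-(n:ℝ))
      = (m:ℝ)*(n:ℝ)*((m:ℝ)+(n:ℝ)-1) := by
    apply mul_left_cancel₀ hMNne
    linear_combination -h3
  have hDp : (0:ℝ) < (m:ℝ)^2+(m:ℝ)*(n:ℝ)+(n:ℝ)^2-(m:ℝ)-(n:ℝ) := by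
    exact Dp_pos' hM2 hN2
  have h1pos : (0:ℝ) < (m:ℝ)+(n:ℝ)-1 := by linarith
  have h1ne : ((m:ℝ)+(n:ℝ)-1) ≠ 0 := ne_of_gt h1pos
  have hDpne : ((m:ℝ)^2+(m:ℝ)*(n:ℝ)+(n:ℝ)^2-(m:ℝ)-(n:ℝ)) ≠ 0 := ne_of_gt hDp
  have P1 : (m:ℝ)*(n:ℝ)*((m:ℝ)*(n:ℝ)) = ((m:ℝ)*(n:ℝ)^2 + (m:ℝ)*((m:ℝ)-1)*w₂^2)*(d:ℝ) := by
    rw [div_mul_eq_mul_div, div_eq_iff hd0] at E1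
    exact E1
  have P2 : (m:ℝ)*(n:ℝ)*((m:ℝ)*(n:ℝ)) = ((n:ℝ)*(m:ℝ)^2 + (n:ℝ)*((n:ℝ)-1)*w₁^2)*(d:ℝ) := by
    rw [div_mul_eq_mul_div, div_eq_iff hd0] at E2
    exact E2
  have w1sq : w₁^2 = (m:ℝ)*(n:ℝ)/((m:ℝ)+(n:ℝ)-1) := by
    rw [eq_div_iff h1ne]
    have hC : (d:ℝ)*(((n:ℝ)-1)*(((m:ℝ)^2+(m:ℝ)*(n:ℝ)+(n:ℝ)^2-(m:ℝ)-(n:ℝ))*(n:ℝ))) ≠ 0 :=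
      ne_of_gt (mul_pos hdpos (mul_pos (by linarith) (mul_pos hDp (by linarith))))
    apply mul_right_cancel₀ hC
    linear_combination (-(((m:ℝ)+(n:ℝ)-1)*((m:ℝ)^2+(m:ℝ)*(n:ℝ)+(n:ℝ)^2-(m:ℝ)-(n:ℝ))))*P2
      + (-((m:ℝ)*(n:ℝ)^2*((n:ℝ)-1)) - ((m:ℝ)+(n:ℝ)-1)*(n:ℝ)*(m:ℝ)^2)*key
  have w2sq : w₂^2 = (m:ℝ)*(n:ℝ)/((m:ℝ)+(n:ℝ)-1) := by
    rw [eq_div_iff h1ne]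
    have hC : (d:ℝ)*(((m:ℝ)-1)*(((m:ℝ)^2+(m:ℝ)*(n:ℝ)+(n:ℝ)^2-(m:ℝ)-(n:ℝ))*(m:ℝ))) ≠ 0 :=
      ne_of_gt (mul_pos hdpos (mul_pos (by linarith) (mul_pos hDp (by linarith))))
    apply mul_right_cancel₀ hC
    linear_combination (-(((m:ℝ)+(n:ℝ)-1)*((m:ℝ)^2+(m:ℝ)*(n:ℝ)+(n:ℝ)^2-(m:ℝ)-(n:ℝ))))*P1
      + (-((n:ℝ)*(m:ℝ)^2*((m:ℝ)-1)) - ((m:ℝ)+(n:ℝ)-1)*(m:ℝ)*(n:ℝ)^2)*key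
  have w1val : w₁ = Real.sqrt ((m:ℝ)*(n:ℝ)/((m:ℝ)+(n:ℝ)-1)) := by
    rw [← Real.sqrt_sq hw₁, w1sq]
  have w2val : w₂ = Real.sqrt ((m:ℝ)*(n:ℝ)/((m:ℝ)+(n:ℝ)-1)) := by
    rw [← Real.sqrt_sq hw₂, w2sq]
  set S := Real.sqrt ((m:ℝ)+(n:ℝ)) with hSdef
  set T := Real.sqrt ((m:ℝ)+(n:ℝ)-1) with hTdef
  set P := Real.sqrt ((m:ℝ)*(n:ℝ)) with hPdef
  have hgS : g = S := rfl
  have hfdef : f = -T/(S*T + ε*P) := rfl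
  have hS2 : S^2 = (m:ℝ)+(n:ℝ) := Real.sq_sqrt (by positivity)
  have hT2 : T^2 = (m:ℝ)+(n:ℝ)-1 := Real.sq_sqrt (by linarith)
  have hP2 : P^2 = (m:ℝ)*(n:ℝ) := Real.sq_sqrt (by positivity)
  have hSpos : 0 < S := Real.sqrt_pos.mpr (by linarith)
  have hTpos : 0 < T := Real.sqrt_pos.mpr (by linarith)
  have hPpos : 0 < P := Real.sqrt_pos.mpr (mul_pos (by linarith) (by linarith))
  have he2 : ε^2 = 1 := by rcases hε with h|h <;> rw [h] <;> norm_num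
  have hPST : P < S*T := by
    have h1 : P^2 < (S*T)^2 := by
      rw [hP2, mul_pow, hS2, hT2]; exact mn_lt_aux' hDp
    exact lt_of_pow_lt_pow_left₀ 2 (by positivity) h1
  have hST0 : 0 < S*T := mul_pos hSpos hTpos
  have hdenpos : 0 < S*T + ε*P := by
    rcases hε with h|h <;> rw [h] <;> [linarith; linarith]
  have hdenne : (S*T + ε*P) ≠ 0 := ne_of_gt hdenpos
  have hf' : f = (-((m:ℝ)+(n:ℝ)-1)*S + ε*(T*P))
      / ((m:ℝ)^2+(m:ℝ)*(n:ℝ)+(n:ℝ)^2-(m:ℝ)-(n:ℝ)) := by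
    rw [hfdef, div_eq_div_iff hdenne hDpne]
    linear_combination (((m:ℝ)+(n:ℝ)-1)*T)*hS2 - (ε*S*P)*hT2 - T*hP2 - (T*P^2)*he2
  have haRval : (m:ℝ)*(n:ℝ)/(d:ℝ)
      = ((m:ℝ)^2+(m:ℝ)*(n:ℝ)+(n:ℝ)^2-(m:ℝ)-(n:ℝ))/((m:ℝ)+(n:ℝ)-1) := by
    rw [div_eq_div_iff hd0 h1ne]
    linear_combination -key
  have hfq : f * ((m:ℝ)^2+(m:ℝ)*(n:ℝ)+(n:ℝ)^2-(m:ℝ)-(n:ℝ))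
      = -((m:ℝ)+(n:ℝ)-1)*S + ε*(T*P) := by
    rw [hf', div_mul_cancel₀ _ hDpne]
  have haq : ((m:ℝ)*(n:ℝ)/(d:ℝ)) * ((m:ℝ)+(n:ℝ)-1)
      = (m:ℝ)^2+(m:ℝ)*(n:ℝ)+(n:ℝ)^2-(m:ℝ)-(n:ℝ) := by
    rw [haRval, div_mul_cancel₀ _ h1ne]
  have h0 : (1 + 2*f*S + f^2*((m:ℝ)*(n:ℝ)/(d:ℝ)))
      * (((m:ℝ)^2+(m:ℝ)*(n:ℝ)+(n:ℝ)^2-(m:ℝ)-(n:ℝ))^2*((m:ℝ)+(n:ℝ)-1)) = 0 := by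
    linear_combination
      (2*S*((m:ℝ)^2+(m:ℝ)*(n:ℝ)+(n:ℝ)^2-(m:ℝ)-(n:ℝ))*((m:ℝ)+(n:ℝ)-1)
        + (f*((m:ℝ)^2+(m:ℝ)*(n:ℝ)+(n:ℝ)^2-(m:ℝ)-(n:ℝ)) + (-((m:ℝ)+(n:ℝ)-1)*S + ε*(T*P)))
          *((m:ℝ)^2+(m:ℝ)*(n:ℝ)+(n:ℝ)^2-(m:ℝ)-(n:ℝ)))*hfq
      + (f^2*((m:ℝ)^2+(m:ℝ)*(n:ℝ)+(n:ℝ)^2-(m:ℝ)-(n:ℝ))^2)*haq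
      + (-((m:ℝ)^2+(m:ℝ)*(n:ℝ)+(n:ℝ)^2-(m:ℝ)-(n:ℝ))*((m:ℝ)+(n:ℝ)-1)^2)*hS2
      + (((m:ℝ)^2+(m:ℝ)*(n:ℝ)+(n:ℝ)^2-(m:ℝ)-(n:ℝ))*P^2)*hT2
      + (((m:ℝ)^2+(m:ℝ)*(n:ℝ)+(n:ℝ)^2-(m:ℝ)-(n:ℝ))*((m:ℝ)+(n:ℝ)-1))*hP2
      + (((m:ℝ)^2+(m:ℝ)*(n:ℝ)+(n:ℝ)^2-(m:ℝ)-(n:ℝ))*T^2*P^2)*he2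
  have ks1' : 1 + 2*f*g + f^2*((m:ℝ)*(n:ℝ)/(d:ℝ)) = 0 := by
    rw [hgS]
    have hCne : (((m:ℝ)^2+(m:ℝ)*(n:ℝ)+(n:ℝ)^2-(m:ℝ)-(n:ℝ))^2*((m:ℝ)+(n:ℝ)-1)) ≠ 0 :=
      ne_of_gt (mul_pos (pow_pos hDp 2) h1pos)
    exact (mul_eq_zero.mp h0).resolve_right hCne
  have hsqv : Real.sqrt ((m:ℝ)*(n:ℝ)/((m:ℝ)+(n:ℝ)-1)) = P/T := by
    rw [Real.sqrt_div (by positivity)]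
  have ks2 : f*((m:ℝ)*(n:ℝ)/(d:ℝ)) + g = ε * Real.sqrt ((m:ℝ)*(n:ℝ)/((m:ℝ)+(n:ℝ)-1)) := by
    rw [hsqv, hgS]
    conv_rhs => rw [← mul_div_assoc]
    rw [eq_div_iff (ne_of_gt hTpos)]
    have hC2 : ((m:ℝ)^2+(m:ℝ)*(n:ℝ)+(n:ℝ)^2-(m:ℝ)-(n:ℝ))*((m:ℝ)+(n:ℝ)-1) ≠ 0 :=
      ne_of_gt (mul_pos hDp h1pos)
    apply mul_right_cancel₀ hC2
    linear_combination (((m:ℝ)^2+(m:ℝ)*(n:ℝ)+(n:ℝ)^2-(m:ℝ)-(n:ℝ))*T)*hfq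
      + (f*T*((m:ℝ)^2+(m:ℝ)*(n:ℝ)+(n:ℝ)^2-(m:ℝ)-(n:ℝ)))*haq
      + (ε*P*((m:ℝ)^2+(m:ℝ)*(n:ℝ)+(n:ℝ)^2-(m:ℝ)-(n:ℝ)))*hT2
  have habs : |f*((m:ℝ)*(n:ℝ)/(d:ℝ)) + g| = Real.sqrt ((m:ℝ)*(n:ℝ)/((m:ℝ)+(n:ℝ)-1)) := by
    rw [ks2, abs_mul]
    rcases hε with h|h <;> rw [h] <;>
      simp [abs_of_nonneg (Real.sqrt_nonneg ((m:ℝ)*(n:ℝ)/((m:ℝ)+(n:ℝ)-1)))]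
  have ha'' : Φ * Φᴴ * Φ = (((m:ℝ)*(n:ℝ)/(d:ℝ) : ℝ) : ℂ) • Φ := by
    rw [ha]
    congr 1
    push_cast
    ring
  have hgsq : g^2 = (m:ℝ)+(n:ℝ) := by rw [hgS]; exact hS2
  have hcols' : ∀ j j' : Fin n, j ≠ j' → ‖(Φᴴ * Φ) j j'‖
      = Real.sqrt ((m:ℝ)*(n:ℝ)/((m:ℝ)+(n:ℝ)-1)) := fun j j' h => by rw [hcols j j' h, w1val]
  have hrows' : ∀ i i' : Fin m, i ≠ i' → ‖(Φ * Φᴴ) i i'‖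
      = Real.sqrt ((m:ℝ)*(n:ℝ)/((m:ℝ)+(n:ℝ)-1)) := fun i i' h => by rw [hrows i i' h, w2val]
  exact etf_aux m n Φ hflat ((m:ℝ)*(n:ℝ)/(d:ℝ)) f g ha'' hgsq ks1' habs hcols' hrows'
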